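/- Let n = 2m and f : 𝔽₂ⁿ → ℤ_{2^k}, and suppose for every u ∈ 𝔽₂ⁿ, with b_j^{(u)} = #{x : f(x) + 2^{k−1}(u·x) = j}, there exists ρ_u ∈ {0, …, 2^{k−1}−1} with b^{(u)}_{2^{k−1}+ρ_u} = b^{(u)}_{ρ_u} ± 2^m and b^{(u)}_{2^{k−1}+j} = b^{(u)}_j for all other j in {0,…,2^{k−1}−1}. Then f is gbent: |H_f(u)| = 2^m for every u. -/

import Mathlib

open Finset Complex

/-- Standard inner product on `𝔽₂ⁿ`. -/
def ip {n : ℕ} (u x : Fin n → ZMod 2) : ZMod 2 := ∑ i, u i * x i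

/-- Walsh–Hadamard transform of a Boolean function. -/
noncomputable def WHT {n : ℕ} (g : (Fin n → ZMod 2) → ZMod 2) (u : Fin n → ZMod 2) : ℂ :=
  ∑ x : Fin n → ZMod 2, (-1 : ℂ) ^ ((g x + ip u x).val)

/-- Generalized Walsh–Hadamard transform of `f : 𝔽₂ⁿ → ℤ_q`. -/
noncomputable def GWT {n : ℕ} (q : ℕ) [NeZero q] (f : (Fin n → ZMod 2) → ZMod q)
    (u : Fin n → ZMod 2) : ℂ :=
  ∑ x : Fin n → ZMod 2,
    Complex.exp (2 * Real.pi * Complex.I * ((f x).val : ℂ) / (q : ℂ)) *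
      (-1 : ℂ) ^ ((ip u x).val)


theorem gbent_of_value_distribution (m k : ℕ) (hk : 1 ≤ k)
    (f : (Fin (2 * m) → ZMod 2) → ZMod (2 ^ k))
    (hdist : ∀ u : Fin (2 * m) → ZMod 2,
      ∃ ρ : ℕ, ρ ≤ 2 ^ (k - 1) - 1 ∧
        ((fun b : ℕ → ℤ =>
          (b (2 ^ (k - 1) + ρ) = b ρ + 2 ^ m ∨ b (2 ^ (k - 1) + ρ) = b ρ - 2 ^ m) ∧
          ∀ j : ℕ, j ≤ 2 ^ (k - 1) - 1 → j ≠ ρ → b (2 ^ (k - 1) + j) = b j)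
         (fun j => ((Finset.univ.filter
            (fun x : Fin (2 * m) → ZMod 2 =>
              f x + ((2 ^ (k - 1) * (ip u x).val : ℕ) : ZMod (2 ^ k)) = (j : ZMod (2 ^ k)))).card : ℤ)))) :
    ∀ u, ‖GWT (2 ^ k) f u‖ = 2 ^ m := by

  intro u
  obtain ⟨ρ, hρ, H⟩ := hdist u
  simp only at H
  obtain ⟨hmain, hrest⟩ := H
  set cb : ℕ → ℕ := fun j => (Finset.univ.filter
      (fun x : Fin (2 * m) → ZMod 2 =>
        f x + ((2 ^ (k - 1) * (ip u x).val : ℕ) : ZMod (2 ^ k)) = (j : ZMod (2 ^ k)))).card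
    with hcbdef
  have hN1 : 1 ≤ 2 ^ (k - 1) := Nat.one_le_two_pow
  have hq2h : (2 ^ k : ℕ) = 2 ^ (k - 1) + 2 ^ (k - 1) := by
    rw [← two_mul, ← pow_succ']
    congr 1
    omega
  have hqC : ((2 ^ k : ℕ) : ℂ) ≠ 0 := Nat.cast_ne_zero.mpr (by positivity)
  have hNC : ((2 ^ (k - 1) : ℕ) : ℂ) ≠ 0 := Nat.cast_ne_zero.mpr (by positivity)
  set ζ : ℂ := Complex.exp (2 * Real.pi * Complex.I / ((2 ^ k : ℕ) : ℂ)) with hζdef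
  have hζq : ζ ^ (2 ^ k : ℕ) = 1 := by
    rw [hζdef, ← Complex.exp_nat_mul]
    have h1 : ((2 ^ k : ℕ) : ℂ) * (2 * Real.pi * Complex.I / ((2 ^ k : ℕ) : ℂ))
        = 2 * Real.pi * Complex.I := by
      field_simp
    rw [h1, Complex.exp_two_pi_mul_I]
  have hζh : ζ ^ (2 ^ (k - 1) : ℕ) = -1 := by
    rw [hζdef, ← Complex.exp_nat_mul]
    have hc : ((2 ^ k : ℕ) : ℂ) = 2 * ((2 ^ (k - 1) : ℕ) : ℂ) := by
      rw [hq2h]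
      push_cast
      ring
    have h1 : ((2 ^ (k - 1) : ℕ) : ℂ) * (2 * Real.pi * Complex.I / ((2 ^ k : ℕ) : ℂ))
        = Real.pi * Complex.I := by
      rw [hc]
      field_simp
    rw [h1, Complex.exp_pi_mul_I]
  have hζmod : ∀ a : ℕ, ζ ^ a = ζ ^ (a % 2 ^ k) := by
    intro a
    conv_lhs => rw [← Nat.div_add_mod a (2 ^ k)]
    rw [pow_add, pow_mul, hζq, one_pow, one_mul]
  have hA : GWT (2 ^ k) f u = ∑ x : Fin (2 * m) → ZMod 2,
      ζ ^ (f x + ((2 ^ (k - 1) * (ip u x).val : ℕ) : ZMod (2 ^ k))).val := by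
    unfold GWT
    refine Finset.sum_congr rfl fun x _ => ?_
    have h1 : Complex.exp (2 * Real.pi * Complex.I * ((f x).val : ℂ) / ((2 ^ k : ℕ) : ℂ))
        = ζ ^ (f x).val := by
      rw [hζdef, ← Complex.exp_nat_mul]
      congr 1
      ring
    have h2 : ((-1 : ℂ)) ^ (ip u x).val = ζ ^ (2 ^ (k - 1) * (ip u x).val) := by
      rw [pow_mul, hζh]
    rw [h1, h2, ← pow_add,
      hζmod ((f x).val + 2 ^ (k - 1) * (ip u x).val),
      hζmod ((f x + ((2 ^ (k - 1) * (ip u x).val : ℕ) : ZMod (2 ^ k))).val)]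
    congr 1
    rw [ZMod.val_add, ZMod.val_natCast,
      Nat.mod_mod_of_dvd _ dvd_rfl, Nat.add_mod_mod]
  have hB : (∑ x : Fin (2 * m) → ZMod 2,
        ζ ^ (f x + ((2 ^ (k - 1) * (ip u x).val : ℕ) : ZMod (2 ^ k))).val)
      = ∑ j ∈ Finset.range (2 ^ k), (cb j : ℂ) * ζ ^ j := by
    rw [← Finset.sum_fiberwise_of_maps_to
      (g := fun x : Fin (2 * m) → ZMod 2 =>
        (f x + ((2 ^ (k - 1) * (ip u x).val : ℕ) : ZMod (2 ^ k))).val)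
      (t := Finset.range (2 ^ k))
      (fun x _ => Finset.mem_range.mpr (ZMod.val_lt _))]
    refine Finset.sum_congr rfl fun j hj => ?_
    have hjq : j < 2 ^ k := Finset.mem_range.mp hj
    have hpred : ∀ x : Fin (2 * m) → ZMod 2,
        ((f x + ((2 ^ (k - 1) * (ip u x).val : ℕ) : ZMod (2 ^ k))).val = j)
        ↔ (f x + ((2 ^ (k - 1) * (ip u x).val : ℕ) : ZMod (2 ^ k)) = (j : ZMod (2 ^ k))) := by
      intro x
      constructor
      · intro h
        rw [← h]
        exact (ZMod.natCast_rightInverse _).symm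
      · intro h
        rw [h, ZMod.val_natCast, Nat.mod_eq_of_lt hjq]
    calc (∑ x ∈ Finset.univ.filter (fun x : Fin (2 * m) → ZMod 2 =>
            (f x + ((2 ^ (k - 1) * (ip u x).val : ℕ) : ZMod (2 ^ k))).val = j),
          ζ ^ (f x + ((2 ^ (k - 1) * (ip u x).val : ℕ) : ZMod (2 ^ k))).val)
        = ∑ x ∈ Finset.univ.filter (fun x : Fin (2 * m) → ZMod 2 =>
            (f x + ((2 ^ (k - 1) * (ip u x).val : ℕ) : ZMod (2 ^ k))).val = j), ζ ^ j :=
          Finset.sum_congr rfl fun x hx => by rw [(Finset.mem_filter.mp hx).2]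
      _ = (cb j : ℂ) * ζ ^ j := by
          rw [Finset.sum_const, nsmul_eq_mul]
          congr 2
          rw [hcbdef]
          exact congrArg Finset.card (Finset.filter_congr fun x _ => hpred x)
  have hD : (∑ j ∈ Finset.range (2 ^ k), (cb j : ℂ) * ζ ^ j)
      = ∑ j ∈ Finset.range (2 ^ (k - 1)),
          ((cb j : ℂ) - (cb (2 ^ (k - 1) + j) : ℂ)) * ζ ^ j := by
    rw [hq2h, Finset.sum_range_add, ← Finset.sum_add_distrib]
    refine Finset.sum_congr rfl fun j _ => ?_
    rw [pow_add, hζh]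
    ring
  have hρh : ρ < 2 ^ (k - 1) := by omega
  have hE : (∑ j ∈ Finset.range (2 ^ (k - 1)),
        ((cb j : ℂ) - (cb (2 ^ (k - 1) + j) : ℂ)) * ζ ^ j)
      = ((cb ρ : ℂ) - (cb (2 ^ (k - 1) + ρ) : ℂ)) * ζ ^ ρ := by
    refine Finset.sum_eq_single_of_mem ρ (Finset.mem_range.mpr hρh) fun j hj hne => ?_
    have hj' : j < 2 ^ (k - 1) := Finset.mem_range.mp hj
    have h1 := hrest j (by omega) hne
    have hc : cb (2 ^ (k - 1) + j) = cb j := by exact_mod_cast h1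
    rw [hc]
    ring
  have hζabs : ‖ζ‖ = 1 := by
    rw [hζdef]
    have h1 : 2 * (Real.pi : ℂ) * Complex.I / ((2 ^ k : ℕ) : ℂ)
        = ((2 * Real.pi / (2 ^ k : ℕ) : ℝ) : ℂ) * Complex.I := by
      push_cast
      ring
    rw [h1, Complex.norm_exp_ofReal_mul_I]
  have habs : ‖(cb ρ : ℂ) - (cb (2 ^ (k - 1) + ρ) : ℂ)‖ = 2 ^ m := by
    rcases hmain with h | h
    · have h' : (cb (2 ^ (k - 1) + ρ) : ℂ) = (cb ρ : ℂ) + 2 ^ m := by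
        exact_mod_cast congrArg (Int.cast : ℤ → ℂ) h
      have h2 : (cb ρ : ℂ) - (cb (2 ^ (k - 1) + ρ) : ℂ) = -(2 ^ m) := by
        rw [h']; ring
      rw [h2, norm_neg, norm_pow, Complex.norm_two]
    · have h' : (cb (2 ^ (k - 1) + ρ) : ℂ) = (cb ρ : ℂ) - 2 ^ m := by
        exact_mod_cast congrArg (Int.cast : ℤ → ℂ) h
      have h2 : (cb ρ : ℂ) - (cb (2 ^ (k - 1) + ρ) : ℂ) = (2 ^ m : ℂ) := by
        rw [h']; ring
      rw [h2, norm_pow, Complex.norm_two]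
  rw [hA, hB, hD, hE, norm_mul, norm_pow, hζabs, one_pow, mul_one, habs]
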